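/- Let α ∈ (0,1), let m ≥ 2, let U be a finite universe of size N, and let Q = (q_1,…,q_m) be a tuple of statistical queries on U with query matrix Q ∈ [0,1]^{m×N}. Let w := ⌈32·ln(m)/α²⌉ and assume w ≤ N and hdisc*(Q, w) ≤ αw/4. Then for every n and every dataset x ∈ U^n whose elements are pairwise distinct, there exist a positive integer s ≤ (5/α)·hdisc*(Q, w) and a dataset y ∈ U^s such that ‖Q(x) − Q(y)‖_∞ ≤ (9/8)·α. -/

import Mathlib

open Matrix

/-- The discrepancy of the columns of `Q` indexed by `S`: the minimum over ±1 colorings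
of `S` of `‖Q_S x‖_∞`. -/
noncomputable def colDisc {m : ℕ} {β : Type*} [Fintype β] (Q : Matrix (Fin m) β ℝ)
    (S : Finset β) : ℝ :=
  sInf { v : ℝ | ∃ x : β → ℝ, (∀ j ∈ S, x j = 1 ∨ x j = -1) ∧
    v = ⨆ i, |∑ j ∈ S, Q i j * x j| }

/-- The restricted hereditary discrepancy `hdisc(Q, w)`. -/
noncomputable def hdisc {m : ℕ} {β : Type*} [Fintype β] (Q : Matrix (Fin m) β ℝ)
    (w : ℕ) : ℝ :=
  sSup { v : ℝ | ∃ S : Finset β, S.card ≤ w ∧ v = colDisc Q S }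

/-- `Q*`: the matrix `Q` with an all-ones row appended. -/
noncomputable def starMatrix {m : ℕ} {β : Type*} [Fintype β] (Q : Matrix (Fin m) β ℝ) :
    Matrix (Fin (m + 1)) β ℝ :=
  Matrix.of fun i j => if h : (i : ℕ) < m then Q ⟨i, h⟩ j else 1

/-- The modified restricted hereditary discrepancy `hdisc*(Q, w)`. -/
noncomputable def hdiscStar {m : ℕ} {β : Type*} [Fintype β] (Q : Matrix (Fin m) β ℝ)
    (w : ℕ) : ℝ :=
  hdisc (starMatrix Q) w


open Finset Real



lemma hoeff_aux {p : ℝ} (hp0 : 0 ≤ p) (hp1 : p ≤ 1) (t : ℝ) :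
    (1 - p) * Real.exp (-(p * t)) + p * Real.exp ((1 - p) * t) ≤ Real.exp (t ^ 2 / 8) := by
  set h : ℝ → ℝ := fun s => 1 - p + p * Real.exp s with hh
  have hpos : ∀ s, 0 < h s := by
    intro s
    rcases lt_or_eq_of_le hp1 with h1 | h1
    · have : 0 < 1 - p := by linarith
      positivity
    · simp [hh, ← h1]
      positivity
  have hd1 : ∀ s, HasDerivAt h (p * Real.exp s) s := by
    intro s
    exact ((Real.hasDerivAt_exp s).const_mul p).const_add (1 - p)
  set φ : ℝ → ℝ := fun s => s / 4 + p - p * Real.exp s / h s with hφdef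
  set f : ℝ → ℝ := fun s => s ^ 2 / 8 + p * s - Real.log (h s) with hfdef
  have hdf : ∀ s, HasDerivAt f (φ s) s := by
    intro s
    have h1 : HasDerivAt (fun s : ℝ => s ^ 2 / 8 + p * s) (s / 4 + p) s := by
      have := ((hasDerivAt_pow 2 s).div_const 8).add ((hasDerivAt_id s).const_mul p)
      exact this.congr_deriv (by ring_nf)
    have h2 : HasDerivAt (fun s => Real.log (h s)) (p * Real.exp s / h s) s :=
      (hd1 s).log (ne_of_gt (hpos s))
    exact h1.sub h2
  have hdφ : ∀ s, HasDerivAt φ (1 / 4 - (p * Real.exp s * h s - p * Real.exp s * (p * Real.exp s)) / (h s) ^ 2) s := by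
    intro s
    have h1 : HasDerivAt (fun s : ℝ => s / 4 + p) (1 / 4) s := by
      simpa using ((hasDerivAt_id s).div_const 4).add_const p
    have h2 : HasDerivAt (fun s => p * Real.exp s / h s)
        ((p * Real.exp s * h s - p * Real.exp s * (p * Real.exp s)) / (h s) ^ 2) s := by
      exact ((Real.hasDerivAt_exp s).const_mul p).div (hd1 s) (ne_of_gt (hpos s))
    exact h1.sub h2
  have hφnonneg : ∀ s, 0 ≤ 1 / 4 - (p * Real.exp s * h s - p * Real.exp s * (p * Real.exp s)) / (h s) ^ 2 := by
    intro s
    have hhs : h s = 1 - p + p * Real.exp s := rfl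
    rw [sub_nonneg, div_le_iff₀ (pow_pos (hpos s) 2), hhs]
    nlinarith [sq_nonneg (1 - p - p * Real.exp s), Real.exp_pos s]
  have hdiffφ : Differentiable ℝ φ := fun s => (hdφ s).differentiableAt
  have hdifff : Differentiable ℝ f := fun s => (hdf s).differentiableAt
  have hφmono : Monotone φ := by
    apply monotone_of_deriv_nonneg hdiffφ
    intro s
    rw [(hdφ s).deriv]
    exact hφnonneg s
  have hφ0 : φ 0 = 0 := by
    simp [hφdef, hh]
  have hf0 : f 0 = 0 := by
    simp [hfdef, hh]
  have hfnonneg : ∀ s, 0 ≤ f s := by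
    intro s
    rcases le_total 0 s with hs | hs
    · have : MonotoneOn f (Set.Ici 0) := by
        apply monotoneOn_of_deriv_nonneg (convex_Ici 0)
        · exact hdifff.continuous.continuousOn
        · exact fun s _ => (hdifff s).differentiableWithinAt
        · intro sP hsP
          rw [interior_Ici] at hsP
          rw [(hdf sP).deriv]
          calc (0:ℝ) = φ 0 := hφ0.symm
            _ ≤ φ sP := hφmono (le_of_lt hsP)
      calc (0:ℝ) = f 0 := hf0.symm
        _ ≤ f s := this (by simp) (by simpa using hs) hs
    · have : AntitoneOn f (Set.Iic 0) := by
        apply antitoneOn_of_deriv_nonpos (convex_Iic 0)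
        · exact hdifff.continuous.continuousOn
        · exact fun s _ => (hdifff s).differentiableWithinAt
        · intro sP hsP
          rw [interior_Iic] at hsP
          rw [(hdf sP).deriv]
          calc φ sP ≤ φ 0 := hφmono (le_of_lt hsP)
            _ = 0 := hφ0
      calc (0:ℝ) = f 0 := hf0.symm
        _ ≤ f s := this (by simpa using hs) (by simp) hs
  have key : h t ≤ Real.exp (t ^ 2 / 8 + p * t) := by
    have := hfnonneg t
    have hlog : Real.log (h t) ≤ t ^ 2 / 8 + p * t := by
      simp only [hfdef] at this
      linarith
    calc h t = Real.exp (Real.log (h t)) := (Real.exp_log (hpos t)).symm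
      _ ≤ _ := Real.exp_le_exp.mpr hlog
  have expand : (1 - p) * Real.exp (-(p * t)) + p * Real.exp ((1 - p) * t)
      = Real.exp (-(p * t)) * h t := by
    have hsplit : Real.exp ((1 - p) * t) = Real.exp (-(p * t)) * Real.exp t := by
      rw [← Real.exp_add]; ring_nf
    rw [hsplit]
    simp only [hh]
    ring
  rw [expand]
  calc Real.exp (-(p * t)) * h t ≤ Real.exp (-(p * t)) * Real.exp (t ^ 2 / 8 + p * t) := by
        exact mul_le_mul_of_nonneg_left key (le_of_lt (Real.exp_pos _))
    _ = Real.exp (t ^ 2 / 8) := by rw [← Real.exp_add]; ring_nf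

lemma mgf_bound {n : ℕ} (Y : Fin n → ℝ) (p : ℝ) (hp0 : 0 ≤ p) (hp1 : p ≤ 1)
    (hmean : ∑ a, Y a = 0) (hY : ∀ a, -p ≤ Y a ∧ Y a ≤ 1 - p) (lam : ℝ) :
    ∑ a, Real.exp (lam * Y a) ≤ n * Real.exp (lam ^ 2 / 8) := by
  have chord : ∀ a, Real.exp (lam * Y a) ≤
      (1 - p - Y a) * Real.exp (-(p * lam)) + (p + Y a) * Real.exp ((1 - p) * lam) := by
    intro a
    have h1 : 0 ≤ 1 - p - Y a := by have := (hY a).2; linarith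
    have h2 : 0 ≤ p + Y a := by have := (hY a).1; linarith
    have h3 : (1 - p - Y a) + (p + Y a) = 1 := by ring
    have := convexOn_exp.2 (Set.mem_univ (-(p * lam))) (Set.mem_univ ((1 - p) * lam)) h1 h2 h3
    simp only [smul_eq_mul] at this
    have harg : (1 - p - Y a) * -(p * lam) + (p + Y a) * ((1 - p) * lam) = lam * Y a := by ring
    rw [harg] at this
    exact this
  calc ∑ a, Real.exp (lam * Y a)
      ≤ ∑ a, ((1 - p - Y a) * Real.exp (-(p * lam)) + (p + Y a) * Real.exp ((1 - p) * lam)) :=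
        Finset.sum_le_sum fun a _ => chord a
    _ = (n * (1 - p)) * Real.exp (-(p * lam)) + (n * p) * Real.exp ((1 - p) * lam) := by
        rw [Finset.sum_add_distrib, ← Finset.sum_mul, ← Finset.sum_mul]
        simp only [Finset.sum_sub_distrib, Finset.sum_add_distrib, hmean,
          Finset.sum_const, Finset.card_univ, Fintype.card_fin, nsmul_eq_mul]
        ring
    _ = n * ((1 - p) * Real.exp (-(p * lam)) + p * Real.exp ((1 - p) * lam)) := by ring
    _ ≤ n * Real.exp (lam ^ 2 / 8) := by
        apply mul_le_mul_of_nonneg_left (hoeff_aux hp0 hp1 lam) (by positivity)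

set_option maxHeartbeats 1000000 in
lemma tail_count {n wn : ℕ} (Y : Fin n → ℝ) (p : ℝ) (hp0 : 0 ≤ p) (hp1 : p ≤ 1)
    (hmean : ∑ a, Y a = 0) (hY : ∀ a, -p ≤ Y a ∧ Y a ≤ 1 - p) (τ : ℝ) (hτ : 0 < τ) :
    ((Finset.univ.filter (fun g : Fin wn → Fin n => (wn : ℝ) * τ ≤ ∑ j, Y (g j))).card : ℝ)
      ≤ (n : ℝ) ^ wn * Real.exp (-(2 * wn * τ ^ 2)) := by
  set B := Finset.univ.filter (fun g : Fin wn → Fin n => (wn : ℝ) * τ ≤ ∑ j, Y (g j)) with hB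
  have key : (B.card : ℝ) * Real.exp (4 * τ * (wn * τ)) ≤ (n : ℝ) ^ wn * Real.exp (2 * wn * τ ^ 2) := by
    calc (B.card : ℝ) * Real.exp (4 * τ * (wn * τ))
        = ∑ _g ∈ B, Real.exp (4 * τ * (wn * τ)) := by rw [Finset.sum_const, nsmul_eq_mul]
      _ ≤ ∑ g ∈ B, ∏ j, Real.exp (4 * τ * Y (g j)) := by
          apply Finset.sum_le_sum
          intro g hg
          rw [← Real.exp_sum, Real.exp_le_exp, ← Finset.mul_sum]
          have hgB : (wn : ℝ) * τ ≤ ∑ j, Y (g j) := (Finset.mem_filter.mp hg).2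
          nlinarith
      _ ≤ ∑ g : Fin wn → Fin n, ∏ j, Real.exp (4 * τ * Y (g j)) := by
          apply Finset.sum_le_sum_of_subset_of_nonneg (Finset.filter_subset _ _)
          intro g _ _
          positivity
      _ = (∑ a, Real.exp (4 * τ * Y a)) ^ wn := (Fintype.sum_pow (fun a => Real.exp (4 * τ * Y a)) wn).symm
      _ ≤ ((n : ℝ) * Real.exp ((4 * τ) ^ 2 / 8)) ^ wn := by
          apply pow_le_pow_left₀ (by positivity)
          exact mgf_bound Y p hp0 hp1 hmean hY (4 * τ)
      _ = (n : ℝ) ^ wn * Real.exp (2 * wn * τ ^ 2) := by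
          rw [mul_pow, ← Real.exp_nat_mul]
          congr 2
          ring
  have hpos : (0 : ℝ) < Real.exp (4 * τ * (wn * τ)) := Real.exp_pos _
  have hEE : Real.exp (2 * (wn : ℝ) * τ ^ 2)
      = Real.exp (-(2 * (wn : ℝ) * τ ^ 2)) * Real.exp (4 * τ * ((wn : ℝ) * τ)) := by
    rw [← Real.exp_add]
    congr 1
    ring
  rw [hEE] at key
  nlinarith [key, hpos]

lemma sampling_exists {m n wn : ℕ} (hn : 1 ≤ n) (r : Fin m → Fin n → ℝ)
    (hr : ∀ i a, r i a ∈ Set.Icc (0 : ℝ) 1) (τ : ℝ) (hτ : 0 < τ)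
    (hsmall : 2 * (m : ℝ) * Real.exp (-(2 * wn * τ ^ 2)) < 1) :
    ∃ g : Fin wn → Fin n, ∀ i, |∑ j, r i (g j) - wn * ((∑ a, r i a) / n)| ≤ wn * τ := by
  by_contra hcon
  push_neg at hcon
  set μ : Fin m → ℝ := fun i => (∑ a, r i a) / n with hμ
  have hnR : (0 : ℝ) < n := by exact_mod_cast hn
  have hμ01 : ∀ i, 0 ≤ μ i ∧ μ i ≤ 1 := by
    intro i
    constructor
    · apply div_nonneg _ (le_of_lt hnR)
      exact Finset.sum_nonneg fun a _ => (hr i a).1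
    · rw [div_le_one hnR]
      calc ∑ a, r i a ≤ ∑ _a : Fin n, (1 : ℝ) := Finset.sum_le_sum fun a _ => (hr i a).2
        _ = n := by simp
  set Y : Fin m → Fin n → ℝ := fun i a => r i a - μ i with hY
  have hYmean : ∀ i, ∑ a, Y i a = 0 := by
    intro i
    simp only [hY, Finset.sum_sub_distrib, Finset.sum_const, Finset.card_univ,
      Fintype.card_fin, nsmul_eq_mul]
    rw [hμ]
    field_simp
    ring
  have hYrange : ∀ i a, -μ i ≤ Y i a ∧ Y i a ≤ 1 - μ i := by
    intro i a
    constructor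
    · simp only [hY]; have := (hr i a).1; linarith
    · simp only [hY]; have := (hr i a).2; linarith
  have hrw : ∀ i (g : Fin wn → Fin n), ∑ j, r i (g j) - wn * μ i = ∑ j, Y i (g j) := by
    intro i g
    simp only [hY, Finset.sum_sub_distrib, Finset.sum_const, Finset.card_univ,
      Fintype.card_fin, nsmul_eq_mul]
  set up : Fin m → Finset (Fin wn → Fin n) :=
    fun i => Finset.univ.filter (fun g => (wn : ℝ) * τ ≤ ∑ j, Y i (g j)) with hup
  set down : Fin m → Finset (Fin wn → Fin n) :=
    fun i => Finset.univ.filter (fun g => (wn : ℝ) * τ ≤ ∑ j, (fun a => -(Y i a)) (g j)) with hdown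
  have hcover : (Finset.univ : Finset (Fin wn → Fin n)) ⊆
      Finset.univ.biUnion (fun i => up i ∪ down i) := by
    intro g _
    obtain ⟨i, hi⟩ := hcon g
    rw [hrw i g] at hi
    rw [Finset.mem_biUnion]
    refine ⟨i, Finset.mem_univ i, ?_⟩
    rcases lt_abs.mp hi with h | h
    · exact Finset.mem_union_left _ (Finset.mem_filter.mpr ⟨Finset.mem_univ g, le_of_lt h⟩)
    · refine Finset.mem_union_right _ (Finset.mem_filter.mpr ⟨Finset.mem_univ g, ?_⟩)
      simp only
      rw [Finset.sum_neg_distrib]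
      linarith
  have hcards : ∀ i, ((up i).card : ℝ) ≤ (n : ℝ) ^ wn * Real.exp (-(2 * wn * τ ^ 2)) ∧
      ((down i).card : ℝ) ≤ (n : ℝ) ^ wn * Real.exp (-(2 * wn * τ ^ 2)) := by
    intro i
    constructor
    · exact tail_count (Y i) (μ i) (hμ01 i).1 (hμ01 i).2 (hYmean i) (hYrange i) τ hτ
    · apply tail_count (fun a => -(Y i a)) (1 - μ i) (by linarith [(hμ01 i).2])
        (by linarith [(hμ01 i).1])
        (by rw [Finset.sum_neg_distrib, hYmean i, neg_zero])
        (fun a => ⟨by have := (hYrange i a).2; show -(1 - μ i) ≤ -Y i a; linarith,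
          by have := (hYrange i a).1; show -Y i a ≤ 1 - (1 - μ i); linarith⟩)
        τ hτ
  have hcard_univ : ((Finset.univ : Finset (Fin wn → Fin n)).card : ℝ) = (n : ℝ) ^ wn := by
    rw [Finset.card_univ, Fintype.card_fun]
    push_cast
    simp
  have htot : ((n : ℝ) ^ wn) ≤ 2 * m * ((n : ℝ) ^ wn * Real.exp (-(2 * wn * τ ^ 2))) := by
    have h1 : ((Finset.univ : Finset (Fin wn → Fin n)).card : ℝ)
        ≤ ∑ i : Fin m, (((up i).card : ℝ) + ((down i).card : ℝ)) := by
      calc ((Finset.univ : Finset (Fin wn → Fin n)).card : ℝ)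
          ≤ ((Finset.univ.biUnion (fun i => up i ∪ down i)).card : ℝ) := by
            exact_mod_cast Finset.card_le_card hcover
        _ ≤ ∑ i : Fin m, (((up i ∪ down i)).card : ℝ) := by
            exact_mod_cast Finset.card_biUnion_le
        _ ≤ ∑ i : Fin m, (((up i).card : ℝ) + ((down i).card : ℝ)) := by
            apply Finset.sum_le_sum
            intro i _
            exact_mod_cast Finset.card_union_le _ _
    rw [hcard_univ] at h1
    calc ((n : ℝ) ^ wn) ≤ ∑ i : Fin m, (((up i).card : ℝ) + ((down i).card : ℝ)) := h1
      _ ≤ ∑ _i : Fin m, 2 * ((n : ℝ) ^ wn * Real.exp (-(2 * wn * τ ^ 2))) := by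
          apply Finset.sum_le_sum
          intro i _
          have := hcards i
          linarith [this.1, this.2]
      _ = 2 * m * ((n : ℝ) ^ wn * Real.exp (-(2 * wn * τ ^ 2))) := by
          rw [Finset.sum_const, Finset.card_univ, Fintype.card_fin, nsmul_eq_mul]
          ring
  have hnw : (0 : ℝ) < (n : ℝ) ^ wn := by positivity
  nlinarith [Real.exp_pos (-(2 * wn * τ ^ 2))]

section disc

variable {M : ℕ} {U : Type*} [Fintype U]

def valSet (A : Matrix (Fin M) U ℝ) (S : Finset U) : Set ℝ :=
  { v : ℝ | ∃ x : U → ℝ, (∀ j ∈ S, x j = 1 ∨ x j = -1) ∧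
    v = ⨆ i, |∑ j ∈ S, A i j * x j| }

lemma colDisc_eq (A : Matrix (Fin M) U ℝ) (S : Finset U) : colDisc A S = sInf (valSet A S) := rfl

lemma valSet_nonempty (A : Matrix (Fin M) U ℝ) (S : Finset U) : (valSet A S).Nonempty :=
  ⟨_, fun _ => 1, fun _ _ => Or.inl rfl, rfl⟩

lemma valSet_finite (A : Matrix (Fin M) U ℝ) (S : Finset U) : (valSet A S).Finite := by
  classical
  apply (Set.finite_range
    (fun σ : U → Bool => ⨆ i, |∑ j ∈ S, A i j * (if σ j then 1 else -1)|)).subset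
  rintro v ⟨x, hx, rfl⟩
  refine ⟨fun j => if x j = 1 then true else false, ?_⟩
  dsimp only
  congr 1
  funext i
  congr 1
  apply Finset.sum_congr rfl
  intro j hj
  rcases hx j hj with h | h
  · simp [h]
  · have hne : x j ≠ 1 := by rw [h]; norm_num
    simp [h]
    norm_num

lemma valSet_bounds (hM : 0 < M) (A : Matrix (Fin M) U ℝ) (S : Finset U) {v : ℝ} (hv : v ∈ valSet A S)
    (hA : ∀ i j, |A i j| ≤ 1) : 0 ≤ v ∧ v ≤ S.card := by
  haveI : Nonempty (Fin M) := ⟨⟨0, hM⟩⟩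
  obtain ⟨x, hx, rfl⟩ := hv
  constructor
  · refine le_trans (abs_nonneg (∑ j ∈ S, A (Classical.arbitrary (Fin M)) j * x j)) ?_
    exact le_ciSup (f := fun i => |∑ j ∈ S, A i j * x j|) (Set.finite_range _).bddAbove _
  · apply ciSup_le
    intro i
    calc |∑ j ∈ S, A i j * x j| ≤ ∑ j ∈ S, |A i j * x j| := Finset.abs_sum_le_sum_abs _ _
      _ ≤ ∑ _j ∈ S, (1:ℝ) := by
          apply Finset.sum_le_sum
          intro j hj
          rw [abs_mul]
          have hxj : |x j| = 1 := by rcases hx j hj with h | h <;> simp [h]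
          rw [hxj, mul_one]
          exact hA i j
      _ = S.card := by simp

lemma colDisc_nonneg (hM : 0 < M) (A : Matrix (Fin M) U ℝ) (S : Finset U) (hA : ∀ i j, |A i j| ≤ 1) :
    0 ≤ colDisc A S := by
  rw [colDisc_eq]
  apply le_csInf (valSet_nonempty A S)
  exact fun v hv => (valSet_bounds hM A S hv hA).1

lemma colDisc_le_hdisc (hM : 0 < M) (A : Matrix (Fin M) U ℝ) {S : Finset U} {w : ℕ} (hS : S.card ≤ w)
    (hA : ∀ i j, |A i j| ≤ 1) : colDisc A S ≤ hdisc A w := by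
  apply le_csSup
  · refine ⟨(w : ℝ), ?_⟩
    rintro v ⟨S', hS', rfl⟩
    rw [colDisc_eq]
    obtain ⟨v0, hv0⟩ := valSet_nonempty A S'
    calc sInf (valSet A S') ≤ v0 :=
          csInf_le ⟨0, fun u hu => (valSet_bounds hM A S' hu hA).1⟩ hv0
      _ ≤ S'.card := (valSet_bounds hM A S' hv0 hA).2
      _ ≤ (w : ℝ) := by exact_mod_cast hS'
  · exact ⟨S, hS, rfl⟩

lemma exists_coloring (hM : 0 < M) (A : Matrix (Fin M) U ℝ) {S : Finset U} {w : ℕ} (hS : S.card ≤ w)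
    (hA : ∀ i j, |A i j| ≤ 1) :
    ∃ ε : U → ℝ, (∀ j ∈ S, ε j = 1 ∨ ε j = -1) ∧
      ∀ i, |∑ j ∈ S, A i j * ε j| ≤ hdisc A w := by
  have hmem : colDisc A S ∈ valSet A S := by
    rw [colDisc_eq]
    exact (valSet_nonempty A S).csInf_mem (valSet_finite A S)
  obtain ⟨x, hx, hval⟩ := hmem
  refine ⟨x, hx, fun i => ?_⟩
  calc |∑ j ∈ S, A i j * x j| ≤ ⨆ i, |∑ j ∈ S, A i j * x j| :=
        le_ciSup (f := fun i => |∑ j ∈ S, A i j * x j|) (Set.finite_range _).bddAbove _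
    _ = colDisc A S := hval.symm
    _ ≤ hdisc A w := colDisc_le_hdisc hM A hS hA

lemma one_le_hdisc (hM : 0 < M) (A : Matrix (Fin M) U ℝ) {w : ℕ} (hw : 1 ≤ w) [Nonempty U]
    (hA : ∀ i j, |A i j| ≤ 1) (i0 : Fin M) (hone : ∀ j, A i0 j = 1) :
    1 ≤ hdisc A w := by
  obtain ⟨u0⟩ := ‹Nonempty U›
  have h1 : (1:ℝ) ≤ colDisc A {u0} := by
    rw [colDisc_eq]
    apply le_csInf (valSet_nonempty A _)
    rintro v ⟨x, hx, rfl⟩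
    calc (1:ℝ) = |∑ j ∈ ({u0} : Finset U), A i0 j * x j| := by
          rw [Finset.sum_singleton, hone u0]
          rcases hx u0 (Finset.mem_singleton_self u0) with h | h <;> simp [h]
      _ ≤ _ := le_ciSup (f := fun i => |∑ j ∈ ({u0} : Finset U), A i j * x j|)
          (Set.finite_range _).bddAbove i0
  calc (1:ℝ) ≤ colDisc A {u0} := h1
    _ ≤ hdisc A w := colDisc_le_hdisc hM A (by simpa using hw) hA

end disc



set_option maxHeartbeats 1000000 in
lemma halving {U : Type} [Fintype U] {m w : ℕ} (qq : Fin m → U → ℝ)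
    (hqq : ∀ i u, qq i u ∈ Set.Icc (0:ℝ) 1) (D α θ : ℝ) (hD : 1 ≤ D)
    (hα0 : 0 < α) (hα1 : α < 1) (hθ : θ = 5 * D / α)
    (Hcol : ∀ S : Finset U, S.card ≤ w → ∃ ε : U → ℝ,
      (∀ j ∈ S, ε j = 1 ∨ ε j = -1) ∧ (∀ i : Fin m, |∑ j ∈ S, qq i j * ε j| ≤ D) ∧
      |∑ j ∈ S, ε j| ≤ D) :
    ∀ k : ℕ, ∀ c : U → ℕ, (∑ u, c u) = k → 1 ≤ k →
      ((univ.filter fun u => c u ≠ 0).card ≤ w) →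
      ∃ c' : U → ℕ, 1 ≤ (∑ u, c' u) ∧ ((∑ u, c' u : ℕ) : ℝ) ≤ θ ∧
        ∀ i : Fin m, |(∑ u, (c' u : ℝ) * qq i u) / ((∑ u, c' u : ℕ) : ℝ)
            - (∑ u, (c u : ℝ) * qq i u) / (k : ℝ)|
          ≤ max 0 (15 * α / 16 - 5 * D / (2 * (k : ℝ))) := by
  intro k
  induction k using Nat.strong_induction_on with
  | _ k ih =>
    intro c hsum hk1 hsupp
    classical
    by_cases hkθ : (k : ℝ) ≤ θ
    · refine ⟨c, by rw [hsum]; exact hk1, by rw [hsum]; exact hkθ, fun i => ?_⟩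
      rw [hsum, sub_self, abs_zero]
      exact le_max_left _ _
    push_neg at hkθ
    have hkpos : (0 : ℝ) < k := by exact_mod_cast hk1
    have hθ5D : 5 * D ≤ θ := by
      rw [hθ]
      rw [le_div_iff₀ hα0]
      nlinarith
    have hαk : 5 * D < α * k := by
      rw [hθ, div_lt_iff₀ hα0] at hkθ
      linarith
    have hDk : D < (k : ℝ) := by nlinarith
    -- the odd set
    set S : Finset U := univ.filter (fun u => Odd (c u)) with hS
    have hScard : S.card ≤ w := by
      refine le_trans (Finset.card_le_card ?_) hsupp
      intro u hu
      rw [Finset.mem_filter] at hu ⊢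
      refine ⟨hu.1, ?_⟩
      obtain ⟨t, ht⟩ := hu.2
      omega
    -- coloring with nonnegative sum
    obtain ⟨ε, hcolor, hrows, he0, heD⟩ : ∃ ε : U → ℝ,
        (∀ j ∈ S, ε j = 1 ∨ ε j = -1) ∧ (∀ i : Fin m, |∑ j ∈ S, qq i j * ε j| ≤ D) ∧
        0 ≤ ∑ j ∈ S, ε j ∧ ∑ j ∈ S, ε j ≤ D := by
      obtain ⟨ε0, hc0, hr0, ho0⟩ := Hcol S hScard
      rcases le_or_gt 0 (∑ j ∈ S, ε0 j) with h | h
      · exact ⟨ε0, hc0, hr0, h, (abs_le.mp ho0).2⟩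
      · refine ⟨fun u => -(ε0 u), ?_, ?_, ?_, ?_⟩
        · intro j hj
          rcases hc0 j hj with h1 | h1 <;> simp [h1]
        · intro i
          have : ∑ j ∈ S, qq i j * -(ε0 j) = -(∑ j ∈ S, qq i j * ε0 j) := by
            rw [← Finset.sum_neg_distrib]
            apply Finset.sum_congr rfl
            intro j _
            ring
          rw [this, abs_neg]
          exact hr0 i
        · show (0:ℝ) ≤ ∑ j ∈ S, -ε0 j
          rw [Finset.sum_neg_distrib]
          linarith
        · show ∑ j ∈ S, -ε0 j ≤ D
          rw [Finset.sum_neg_distrib]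
          have := (abs_le.mp ho0).1
          linarith
    set e : ℝ := ∑ j ∈ S, ε j with he
    -- the halved multiset
    set c' : U → ℕ := fun u => (c u + if u ∈ S ∧ ε u = 1 then 1 else 0) / 2 with hc'
    have hcast : ∀ u, (c' u : ℝ) = ((c u : ℝ) + (if u ∈ S then ε u else 0)) / 2 := by
      intro u
      by_cases hu : u ∈ S
      · have hodd : Odd (c u) := by
          rw [hS, Finset.mem_filter] at hu
          exact hu.2
        obtain ⟨t, ht⟩ := hodd
        rcases hcolor u hu with h1 | h1
        · have hnat : c' u = t + 1 := by
            simp only [hc']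
            rw [if_pos ⟨hu, h1⟩, ht]
            omega
          rw [hnat, if_pos hu, h1, ht]
          push_cast
          ring
        · have hne : ¬(u ∈ S ∧ ε u = 1) := by
            rintro ⟨-, h2⟩
            rw [h1] at h2
            norm_num at h2
          have hnat : c' u = t := by
            simp only [hc']
            rw [if_neg hne, ht]
            omega
          rw [hnat, if_pos hu, h1, ht]
          push_cast
          ring
      · have heven : ¬ Odd (c u) := by
          intro h
          exact hu (by rw [hS, Finset.mem_filter]; exact ⟨Finset.mem_univ u, h⟩)
        rw [Nat.not_odd_iff_even] at heven
        obtain ⟨t, ht⟩ := heven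
        have hne : ¬(u ∈ S ∧ ε u = 1) := fun h => hu h.1
        have hnat : c' u = t := by
          simp only [hc']
          rw [if_neg hne, ht]
          omega
        rw [hnat, if_neg hu, ht]
        push_cast
        ring
    set k' : ℕ := ∑ u, c' u with hk'
    have hk'cast : ((k' : ℕ) : ℝ) = ((k : ℝ) + e) / 2 := by
      push_cast [hk']
      rw [Finset.sum_congr rfl (fun u _ => hcast u)]
      rw [← Finset.sum_div, Finset.sum_add_distrib]
      rw [Finset.sum_ite_mem, Finset.univ_inter]
      have : ∑ u, (c u : ℝ) = k := by
        rw [← hsum]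
        push_cast
        rfl
      rw [this, ← he]
    have hk'lo : (k : ℝ) / 2 ≤ (k' : ℝ) := by rw [hk'cast]; linarith
    have hk'hi : (k' : ℝ) ≤ ((k : ℝ) + D) / 2 := by rw [hk'cast]; linarith
    have hk'pos : (0 : ℝ) < (k' : ℝ) := by linarith
    have hk'1 : 1 ≤ k' := by
      by_contra h
      push_neg at h
      interval_cases k'
      · norm_num at hk'pos
    have hk'lt : k' < k := by
      have : (k' : ℝ) < (k : ℝ) := by linarith
      exact_mod_cast this
    have hsupp' : ((univ.filter fun u => c' u ≠ 0).card ≤ w) := by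
      refine le_trans (Finset.card_le_card ?_) hsupp
      intro u hu
      rw [Finset.mem_filter] at hu ⊢
      refine ⟨hu.1, ?_⟩
      intro hcu
      apply hu.2
      have hunotS : u ∉ S := by
        rw [hS, Finset.mem_filter]
        rintro ⟨-, h⟩
        rw [hcu] at h
        simp [Nat.odd_iff] at h
      simp only [hc']
      rw [if_neg (fun h => hunotS h.1), hcu]
    -- step error bound
    have hstep : ∀ i : Fin m, |(∑ u, (c' u : ℝ) * qq i u) / (k' : ℝ)
        - (∑ u, (c u : ℝ) * qq i u) / (k : ℝ)| ≤ D / (k' : ℝ) := by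
      intro i
      set v : ℝ := ∑ u, (c u : ℝ) * qq i u with hv
      set d : ℝ := ∑ j ∈ S, qq i j * ε j with hd
      have hv' : ∑ u, (c' u : ℝ) * qq i u = (v + d) / 2 := by
        rw [Finset.sum_congr rfl (fun u _ => by rw [hcast u])]
        have : ∀ u, ((c u : ℝ) + (if u ∈ S then ε u else 0)) / 2 * qq i u
            = ((c u : ℝ) * qq i u + (if u ∈ S then qq i u * ε u else 0)) / 2 := by
          intro u
          by_cases hu : u ∈ S
          · rw [if_pos hu, if_pos hu]; ring
          · rw [if_neg hu, if_neg hu]; ring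
        rw [Finset.sum_congr rfl (fun u _ => this u)]
        rw [← Finset.sum_div, Finset.sum_add_distrib, Finset.sum_ite_mem, Finset.univ_inter]
      have hvnn : 0 ≤ v := by
        apply Finset.sum_nonneg
        intro u _
        exact mul_nonneg (Nat.cast_nonneg _) (hqq i u).1
      have hvle : v ≤ k := by
        calc v ≤ ∑ u, (c u : ℝ) * 1 := by
              apply Finset.sum_le_sum
              intro u _
              exact mul_le_mul_of_nonneg_left (hqq i u).2 (Nat.cast_nonneg _)
          _ = k := by
              simp only [mul_one]
              rw [← hsum]
              push_cast
              rfl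
      have hdD : |d| ≤ D := hrows i
      have hexpand : (∑ u, (c' u : ℝ) * qq i u) / (k' : ℝ) - v / (k : ℝ)
          = (d * k - v * e) / (2 * (k' : ℝ) * (k : ℝ)) := by
        rw [hv', hk'cast]
        field_simp
        ring
      rw [hexpand, abs_div]
      have hnum : |d * (k:ℝ) - v * e| ≤ 2 * D * k := by
        have h1 : |d * (k:ℝ)| ≤ D * k := by
          rw [abs_mul, abs_of_nonneg (le_of_lt hkpos)]
          exact mul_le_mul_of_nonneg_right hdD (le_of_lt hkpos)
        have h2 : |v * e| ≤ D * k := by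
          rw [abs_mul, abs_of_nonneg hvnn, abs_of_nonneg he0]
          calc v * e ≤ (k : ℝ) * D := by
                apply mul_le_mul hvle heD he0 (le_of_lt hkpos)
            _ = D * k := by ring
        calc |d * (k:ℝ) - v * e| ≤ |d * (k:ℝ)| + |v * e| := abs_sub _ _
          _ ≤ 2 * D * k := by linarith
      have hden : |2 * (k' : ℝ) * (k : ℝ)| = 2 * (k' : ℝ) * (k : ℝ) := by
        apply abs_of_pos
        positivity
      rw [hden]
      rw [div_le_div_iff₀ (by positivity) hk'pos]
      calc |d * (k:ℝ) - v * e| * (k' : ℝ) ≤ (2 * D * k) * (k' : ℝ) := by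
            apply mul_le_mul_of_nonneg_right hnum (le_of_lt hk'pos)
        _ = D * (2 * (k' : ℝ) * (k : ℝ)) := by ring
    -- recursive call
    obtain ⟨c'', h1'', hθ'', herr''⟩ := ih k' hk'lt c' rfl hk'1 hsupp'
    refine ⟨c'', h1'', hθ'', fun i => ?_⟩
    have htri : |(∑ u, (c'' u : ℝ) * qq i u) / ((∑ u, c'' u : ℕ) : ℝ)
          - (∑ u, (c u : ℝ) * qq i u) / (k : ℝ)|
        ≤ max 0 (15 * α / 16 - 5 * D / (2 * (k' : ℝ))) + D / (k' : ℝ) := by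
      calc |(∑ u, (c'' u : ℝ) * qq i u) / ((∑ u, c'' u : ℕ) : ℝ)
            - (∑ u, (c u : ℝ) * qq i u) / (k : ℝ)|
          ≤ |(∑ u, (c'' u : ℝ) * qq i u) / ((∑ u, c'' u : ℕ) : ℝ)
            - (∑ u, (c' u : ℝ) * qq i u) / (k' : ℝ)|
            + |(∑ u, (c' u : ℝ) * qq i u) / (k' : ℝ)
            - (∑ u, (c u : ℝ) * qq i u) / (k : ℝ)| := abs_sub_le _ _ _
        _ ≤ max 0 (15 * α / 16 - 5 * D / (2 * (k' : ℝ))) + D / (k' : ℝ) := by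
            have := herr'' i
            have h2 := hstep i
            exact add_le_add this h2
    refine le_trans htri ?_
    -- arithmetic: max 0 (A - C/k') + D/k' ≤ max 0 (A - C/k)
    have harith : max 0 (15 * α / 16 - 5 * D / (2 * (k' : ℝ))) + D / (k' : ℝ)
        ≤ 15 * α / 16 - 5 * D / (2 * (k : ℝ)) := by
      rcases le_or_gt (15 * α / 16 - 5 * D / (2 * (k' : ℝ))) 0 with hc1 | hc1
      · rw [max_eq_left hc1]
        rw [zero_add]
        have h2 : D / (k' : ℝ) ≤ 2 * D / (k : ℝ) := by
          rw [div_le_div_iff₀ hk'pos hkpos]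
          nlinarith
        have h3 : 2 * D / (k : ℝ) + 5 * D / (2 * (k : ℝ)) ≤ 15 * α / 16 := by
          rw [div_add_div _ _ (ne_of_gt hkpos) (by positivity)]
          rw [div_le_iff₀ (by positivity)]
          nlinarith
        linarith
      · rw [max_eq_right (le_of_lt hc1)]
        have hdiv : 5 * D / (2 * (k : ℝ)) ≤ (5 * D - 2 * D) / (2 * (k' : ℝ)) := by
          rw [div_le_div_iff₀ (by positivity) (by positivity)]
          nlinarith
        have hsubdiv : (5 * D - 2 * D) / (2 * (k' : ℝ))
            = 5 * D / (2 * (k' : ℝ)) - D / (k' : ℝ) := by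
          rw [sub_div, mul_div_mul_left _ _ (two_ne_zero)]
        linarith [hsubdiv ▸ hdiv]
    exact le_trans harith (le_max_right _ _)

theorem stmt17 (α : ℝ) (hα : α ∈ Set.Ioo (0 : ℝ) 1)
    (U : Type) [Fintype U] (m : ℕ) (hm : 2 ≤ m)
    (q : Fin m → U → ℝ) (hq : ∀ i u, q i u ∈ Set.Icc (0 : ℝ) 1)
    (w : ℕ) (hw : w = ⌈32 * Real.log m / α ^ 2⌉₊)
    (hwN : w ≤ Fintype.card U)
    (hH : hdiscStar (Matrix.of fun i u => q i u) w ≤ α * w / 4)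
    (n : ℕ) (hn : 1 ≤ n) (x : Fin n → U) (hx : Function.Injective x) :
    ∃ s : ℕ, 1 ≤ s ∧ (s : ℝ) ≤ (5 / α) * hdiscStar (Matrix.of fun i u => q i u) w ∧
      ∃ y : Fin s → U,
        ∀ i, |(∑ a, q i (x a)) / n - (∑ b, q i (y b)) / s| ≤ (9 / 8) * α := by
  classical
  obtain ⟨hα0, hα1⟩ := hα
  set A : Matrix (Fin (m + 1)) U ℝ := starMatrix (Matrix.of fun i u => q i u) with hA
  set D : ℝ := hdiscStar (Matrix.of fun i u => q i u) w with hD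
  have hDA : D = hdisc A w := rfl
  have hM : 0 < m + 1 := Nat.succ_pos m
  have hAbs : ∀ i j, |A i j| ≤ 1 := by
    intro i j
    rw [hA]
    simp only [starMatrix, Matrix.of_apply]
    by_cases h : (i : ℕ) < m
    · rw [dif_pos h]
      rw [abs_le]
      constructor
      · linarith [(hq ⟨i, h⟩ j).1]
      · exact (hq ⟨i, h⟩ j).2
    · rw [dif_neg h]
      norm_num
  have hm1 : (1 : ℝ) < m := by exact_mod_cast hm
  have hlogm : 0 < Real.log m := Real.log_pos hm1
  have hw1 : 1 ≤ w := by
    rw [hw]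
    rw [Nat.one_le_ceil_iff]
    positivity
  have hUne : Nonempty U := by
    rw [← Fintype.card_pos_iff]
    omega
  have hD1 : (1 : ℝ) ≤ D := by
    rw [hDA]
    apply one_le_hdisc hM A hw1 hAbs (Fin.last m)
    intro j
    rw [hA]
    simp [starMatrix]
  have hD0 : (0 : ℝ) < D := by linarith
  -- sampling step
  have hwR : 32 * Real.log m / α ^ 2 ≤ (w : ℝ) := by
    rw [hw]
    exact Nat.le_ceil _
  set τ : ℝ := 3 * α / 16 with hτdef
  have hτ0 : 0 < τ := by rw [hτdef]; positivity
  have hsmall : 2 * (m : ℝ) * Real.exp (-(2 * w * τ ^ 2)) < 1 := by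
    have hkey : Real.log (2 * m) < 2 * w * τ ^ 2 := by
      have h1 : Real.log (2 * m) = Real.log 2 + Real.log m := by
        rw [Real.log_mul (by norm_num) (by positivity)]
      have h2 : (9 : ℝ) / 4 * Real.log m ≤ 2 * w * τ ^ 2 := by
        have : 2 * (w : ℝ) * τ ^ 2 = (w : ℝ) * (9 * α ^ 2 / 128) := by
          rw [hτdef]; ring
        rw [this]
        calc (9:ℝ)/4 * Real.log m = (32 * Real.log m / α ^ 2) * (9 * α ^ 2 / 128) := by
              field_simp
              ring
          _ ≤ (w : ℝ) * (9 * α ^ 2 / 128) := by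
              apply mul_le_mul_of_nonneg_right hwR (by positivity)
      have h3 : Real.log 2 ≤ Real.log m := Real.log_le_log (by norm_num) (by exact_mod_cast hm)
      have h4 : 0 < Real.log 2 := Real.log_pos (by norm_num)
      nlinarith
    have h2m : (0 : ℝ) < 2 * m := by positivity
    have h5 : Real.exp (-(2 * (w:ℝ) * τ ^ 2)) < Real.exp (-(Real.log (2 * m))) :=
      Real.exp_lt_exp.mpr (by linarith)
    have h6 : Real.exp (-(Real.log (2 * (m:ℝ)))) = (2 * (m:ℝ))⁻¹ := by
      rw [Real.exp_neg, Real.exp_log h2m]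
    rw [h6] at h5
    calc 2 * (m : ℝ) * Real.exp (-(2 * w * τ ^ 2)) < 2 * (m:ℝ) * (2 * (m:ℝ))⁻¹ := by
          apply mul_lt_mul_of_pos_left h5 h2m
      _ = 1 := by
          rw [mul_inv_cancel₀ (ne_of_gt h2m)]
  obtain ⟨g, hg⟩ := sampling_exists hn (fun i a => q i (x a))
    (fun i a => hq i (x a)) τ hτ0 hsmall
  -- the sampled multiset
  set c₀ : U → ℕ := fun u => (univ.filter (fun j : Fin w => x (g j) = u)).card with hc₀
  have hsum0 : ∑ u, c₀ u = w := by
    rw [hc₀]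
    rw [← Finset.card_eq_sum_card_fiberwise (f := fun j => x (g j)) (fun j _ => mem_univ _)]
    simp
  have hsupp0 : (univ.filter fun u => c₀ u ≠ 0).card ≤ w := by
    have hsub : (univ.filter fun u => c₀ u ≠ 0) ⊆ Finset.image (fun j => x (g j)) univ := by
      intro u hu
      rw [Finset.mem_filter] at hu
      have : (univ.filter (fun j : Fin w => x (g j) = u)).Nonempty := by
        rw [Finset.nonempty_iff_ne_empty]
        intro hemp
        apply hu.2
        rw [hc₀]
        simp only [hemp, Finset.card_empty]
      obtain ⟨j, hj⟩ := this
      rw [Finset.mem_filter] at hj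
      rw [Finset.mem_image]
      exact ⟨j, mem_univ j, hj.2⟩
    calc (univ.filter fun u => c₀ u ≠ 0).card ≤ (Finset.image (fun j => x (g j)) univ).card :=
          Finset.card_le_card hsub
      _ ≤ (univ : Finset (Fin w)).card := Finset.card_image_le
      _ = w := by simp
  have hv0 : ∀ i, ∑ u, (c₀ u : ℝ) * q i u = ∑ j, q i (x (g j)) := by
    intro i
    rw [← Finset.sum_fiberwise' univ (fun j => x (g j)) (fun u => q i u)]
    apply Finset.sum_congr rfl
    intro u _
    rw [Finset.sum_const, nsmul_eq_mul, hc₀]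
  -- coloring oracle
  have Hcol : ∀ S : Finset U, S.card ≤ w → ∃ ε : U → ℝ,
      (∀ j ∈ S, ε j = 1 ∨ ε j = -1) ∧ (∀ i : Fin m, |∑ j ∈ S, q i j * ε j| ≤ D) ∧
      |∑ j ∈ S, ε j| ≤ D := by
    intro S hS
    obtain ⟨ε, hcol, hrows⟩ := exists_coloring hM A hS hAbs
    refine ⟨ε, hcol, ?_, ?_⟩
    · intro i
      have := hrows (Fin.castSucc i)
      rw [← hDA] at this
      convert this using 2
      apply Finset.sum_congr rfl
      intro j _
      rw [hA]
      simp only [starMatrix, Matrix.of_apply]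
      rw [dif_pos (by simpa using i.isLt)]
      congr
    · have := hrows (Fin.last m)
      rw [← hDA] at this
      convert this using 2
      apply Finset.sum_congr rfl
      intro j _
      rw [hA]
      simp [starMatrix]
  -- halving step
  obtain ⟨c'', h1'', hθ'', herr''⟩ := halving q hq D α (5 * D / α) hD1 hα0 hα1 rfl Hcol
    w c₀ hsum0 hw1 hsupp0
  set s : ℕ := ∑ u, c'' u with hs
  refine ⟨s, h1'', ?_, ?_⟩
  · calc (s : ℝ) ≤ 5 * D / α := hθ''
      _ = 5 / α * D := by ring
  -- construct y
  have hcard : Fintype.card (Σ u : U, Fin (c'' u)) = s := by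
    simp [hs]
  let e : Fin s ≃ (Σ u : U, Fin (c'' u)) := (Fintype.equivFinOfCardEq hcard).symm
  refine ⟨fun b => (e b).1, ?_⟩
  intro i
  have hy : ∑ b, q i ((e b).1) = ∑ u, (c'' u : ℝ) * q i u := by
    rw [Equiv.sum_comp e (fun σ => q i σ.1)]
    rw [← Finset.univ_sigma_univ, Finset.sum_sigma]
    apply Finset.sum_congr rfl
    intro u _
    simp [Finset.card_univ, mul_comm]
  rw [hy]
  -- triangle inequality
  have hwpos : (0 : ℝ) < w := by exact_mod_cast hw1
  have hsamp : |(∑ j, q i (x (g j))) / (w:ℝ) - (∑ a, q i (x a)) / n| ≤ τ := by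
    have := hg i
    have hrw : (∑ j, q i (x (g j))) / (w:ℝ) - (∑ a, q i (x a)) / n
        = (∑ j, q i (x (g j)) - w * ((∑ a, q i (x a)) / n)) / w := by
      field_simp
    rw [hrw, abs_div, abs_of_pos hwpos, div_le_iff₀ hwpos]
    calc |∑ j, q i (x (g j)) - (w:ℝ) * ((∑ a, q i (x a)) / n)| ≤ w * τ := this
      _ = τ * w := by ring
  have hhalf : |(∑ u, (c'' u : ℝ) * q i u) / (s : ℝ) - (∑ j, q i (x (g j))) / (w:ℝ)|
      ≤ 15 * α / 16 := by
    have := herr'' i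
    rw [hv0 i] at this
    refine le_trans this ?_
    apply max_le (by positivity)
    have : 0 ≤ 5 * D / (2 * (w:ℝ)) := by positivity
    linarith
  calc |(∑ a, q i (x a)) / (n:ℝ) - (∑ u, (c'' u : ℝ) * q i u) / (s:ℝ)|
      ≤ |(∑ a, q i (x a)) / (n:ℝ) - (∑ j, q i (x (g j))) / (w:ℝ)|
        + |(∑ j, q i (x (g j))) / (w:ℝ) - (∑ u, (c'' u : ℝ) * q i u) / (s:ℝ)| := by
        exact abs_sub_le _ _ _
    _ ≤ τ + 15 * α / 16 := by
        rw [abs_sub_comm] at hsamp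
        rw [abs_sub_comm] at hhalf
        exact add_le_add hsamp hhalf
    _ = 9 / 8 * α := by rw [hτdef]; ring
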